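/- Let 1 ≤ p ≤ 2 and let μ be a measure. For any doubly-indexed family of nonnegative measurable functions a_{ij}, one has ‖(∑_i ∑_j a_{ij})^{1/2}‖_{L^p(μ)} ≤ ∑_j (∑_i ‖a_{ij}^{1/2}‖_{L^p(μ)}^p)^{1/p}. -/

import Mathlib

open MeasureTheory ENNReal

/-- Pointwise subadditivity of `x ↦ x ^ q` for `0 < q ≤ 1` over a countable sum. -/
lemma ennreal_rpow_tsum_le {ι : Type*} (f : ι → ℝ≥0∞) {q : ℝ} (hq0 : 0 < q) (hq1 : q ≤ 1) :
    (∑' i, f i) ^ q ≤ ∑' i, (f i) ^ q := by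
  rw [ENNReal.tsum_eq_iSup_sum]
  rw [Monotone.map_iSup_of_continuousAt (f := fun x : ℝ≥0∞ => x ^ q)
    ENNReal.continuous_rpow_const.continuousAt (ENNReal.monotone_rpow_of_nonneg hq0.le)
    (by simpa using ENNReal.zero_rpow_of_pos hq0)]
  refine iSup_le fun s => ?_
  calc (∑ i ∈ s, f i) ^ q ≤ ∑ i ∈ s, (f i) ^ q := by
        classical
        induction s using Finset.induction_on with
        | empty => simp [ENNReal.zero_rpow_of_pos hq0]
        | insert _ _ h ih =>
            rw [Finset.sum_insert h, Finset.sum_insert h]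
            exact le_trans (ENNReal.rpow_add_le_add_rpow _ _ hq0.le hq1)
              (add_le_add_right ih _)
    _ ≤ ∑' i, (f i) ^ q := ENNReal.sum_le_tsum s

/-- Minkowski's inequality for a finite sum of `ℝ≥0∞`-valued functions. -/
lemma lintegral_Lp_finset_sum_le {X : Type*} [MeasurableSpace X] (μ : Measure X)
    {p : ℝ} (hp1 : 1 ≤ p) (g : ℕ → X → ℝ≥0∞) (hg : ∀ j, Measurable (g j)) (n : ℕ) :
    (∫⁻ x, (∑ j ∈ Finset.range n, g j x) ^ p ∂μ) ^ (1 / p) ≤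
      ∑ j ∈ Finset.range n, (∫⁻ x, (g j x) ^ p ∂μ) ^ (1 / p) := by
  have hp0 : (0:ℝ) < p := lt_of_lt_of_le zero_lt_one hp1
  have hip : (0:ℝ) < 1 / p := by positivity
  induction n with
  | zero =>
      simp only [Finset.range_zero, Finset.sum_empty, ENNReal.zero_rpow_of_pos hp0,
        lintegral_zero, ENNReal.zero_rpow_of_pos hip, le_refl]
  | succ n ih =>
      simp only [Finset.sum_range_succ]
      have hmeas : Measurable fun x => ∑ j ∈ Finset.range n, g j x :=
        Finset.measurable_sum _ fun j _ => hg j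
      refine le_trans
        (ENNReal.lintegral_Lp_add_le hmeas.aemeasurable (hg n).aemeasurable hp1) ?_
      gcongr

/-- Minkowski's inequality for a countable sum of `ℝ≥0∞`-valued functions. -/
lemma lintegral_Lp_tsum_le {X : Type*} [MeasurableSpace X] (μ : Measure X)
    {p : ℝ} (hp1 : 1 ≤ p) (g : ℕ → X → ℝ≥0∞) (hg : ∀ j, Measurable (g j)) :
    (∫⁻ x, (∑' j, g j x) ^ p ∂μ) ^ (1 / p) ≤ ∑' j, (∫⁻ x, (g j x) ^ p ∂μ) ^ (1 / p) := by
  have hp0 : (0:ℝ) < p := lt_of_lt_of_le zero_lt_one hp1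
  have hip : (0:ℝ) < 1 / p := by positivity
  have key : (∫⁻ x, (∑' j, g j x) ^ p ∂μ) =
      ⨆ n, ∫⁻ x, (∑ j ∈ Finset.range n, g j x) ^ p ∂μ := by
    rw [← lintegral_iSup (fun n => (Finset.measurable_sum _ fun j _ => hg j).pow_const p)
      (fun m n hmn x => ENNReal.rpow_le_rpow
        (Finset.sum_le_sum_of_subset (Finset.range_subset_range.2 hmn)) hp0.le)]
    congr 1
    ext x
    rw [ENNReal.tsum_eq_iSup_nat]
    exact Monotone.map_iSup_of_continuousAt (f := fun y : ℝ≥0∞ => y ^ p)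
      ENNReal.continuous_rpow_const.continuousAt (ENNReal.monotone_rpow_of_nonneg hp0.le)
      (by simpa using ENNReal.zero_rpow_of_pos hp0)
  rw [key, Monotone.map_iSup_of_continuousAt (f := fun y : ℝ≥0∞ => y ^ (1 / p))
    ENNReal.continuous_rpow_const.continuousAt (ENNReal.monotone_rpow_of_nonneg hip.le)
    (by simpa using ENNReal.zero_rpow_of_pos hip)]
  refine iSup_le fun n => ?_
  exact le_trans (lintegral_Lp_finset_sum_le μ hp1 g hg n)
    (ENNReal.sum_le_tsum _)

/-- For `1 ≤ p ≤ 2` and a doubly-indexed family of nonnegative measurable functions `a i j`,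
`‖(∑_i ∑_j a_{ij})^{1/2}‖_{L^p(μ)} ≤ ∑_j (∑_i ‖a_{ij}^{1/2}‖_{L^p(μ)}^p)^{1/p}`,
written with `ℝ≥0∞`-valued functions and `lintegral`s:
`‖g^{1/2}‖_{L^p}^ = (∫⁻ g^{p/2})^{1/p}`. -/
theorem lp_sqrt_double_sum_bound {X : Type*} [MeasurableSpace X] (μ : Measure X)
    (p : ℝ) (hp1 : 1 ≤ p) (hp2 : p ≤ 2)
    (a : ℕ → ℕ → X → ℝ≥0∞) (ha : ∀ i j, Measurable (a i j)) :
    (∫⁻ x, (∑' i, ∑' j, a i j x) ^ (p / 2) ∂μ) ^ (1 / p) ≤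
      ∑' j, (∑' i, (∫⁻ x, (a i j x) ^ (p / 2) ∂μ)) ^ (1 / p) := by
  have hp0 : (0:ℝ) < p := lt_of_lt_of_le zero_lt_one hp1
  -- define h j x = (∑' i, a i j x) ^ (1/2)
  set h : ℕ → X → ℝ≥0∞ := fun j x => (∑' i, a i j x) ^ ((1:ℝ)/2) with hh
  have hhm : ∀ j, Measurable (h j) := fun j =>
    (Measurable.ennreal_tsum fun i => ha i j).pow_const _
  have step1 : (∫⁻ x, (∑' i, ∑' j, a i j x) ^ (p / 2) ∂μ) ^ (1 / p) ≤
      (∫⁻ x, (∑' j, h j x) ^ p ∂μ) ^ (1 / p) := by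
    gcongr with x
    have hxswap : (∑' i, ∑' j, a i j x) = ∑' j, ∑' i, a i j x := ENNReal.tsum_comm
    calc (∑' i, ∑' j, a i j x) ^ (p / 2)
        = ((∑' j, ∑' i, a i j x) ^ ((1:ℝ)/2)) ^ p := by
          rw [hxswap, ← ENNReal.rpow_mul, one_div, inv_mul_eq_div]
        _ ≤ (∑' j, (∑' i, a i j x) ^ ((1:ℝ)/2)) ^ p :=
          ENNReal.rpow_le_rpow
            (ennreal_rpow_tsum_le _ (by norm_num) (by norm_num)) hp0.le
  refine step1.trans ?_
  refine (lintegral_Lp_tsum_le μ hp1 h hhm).trans ?_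
  refine ENNReal.tsum_le_tsum fun j => ?_
  gcongr
  have heq : ∀ x, (h j x) ^ p = (∑' i, a i j x) ^ (p / 2) := fun x => by
    rw [hh, ← ENNReal.rpow_mul, one_div, inv_mul_eq_div]
  calc (∫⁻ x, (h j x) ^ p ∂μ) = ∫⁻ x, (∑' i, a i j x) ^ (p / 2) ∂μ := by
        simp only [heq]
    _ ≤ ∫⁻ x, ∑' i, (a i j x) ^ (p / 2) ∂μ := by
        refine lintegral_mono fun x => ennreal_rpow_tsum_le _ (by positivity) ?_
        linarith
    _ = ∑' i, ∫⁻ x, (a i j x) ^ (p / 2) ∂μ :=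
        lintegral_tsum fun i => ((ha i j).pow_const _).aemeasurable
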